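/- arXiv:2504.00546 — 2 statements merged into one kernel-verified Lean document; each statement's English description precedes it below -/
import Mathlib

section
/- The four polynomials c1⁰ = −12·I2, c2⁰ = I4 + Ĩ4/4 + 368·I2², d2⁰ = −I4/6 + Ĩ4/48 − (88/3)·I2², d3⁰ = I6/16 + 8·I2·I4 − I2·Ĩ4/2 + 896·I2³ in ℂ[z1,z2,z3,z4] are algebraically independent over ℂ. -/
open MvPolynomial Complex

/-- `I2 = z1²+z2²+z3²+z4²` -/
noncomputable def I2 : MvPolynomial (Fin 4) ℂ := ∑ i, X i ^ 2

/-- `I4 = Σ_{i<j} zi²zj²` -/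
noncomputable def I4 : MvPolynomial (Fin 4) ℂ :=
  ∑ p ∈ Finset.univ.filter (fun p : Fin 4 × Fin 4 => p.1 < p.2), X p.1 ^ 2 * X p.2 ^ 2

/-- `I6 = Σ_{i<j<k} zi²zj²zk²` -/
noncomputable def I6 : MvPolynomial (Fin 4) ℂ :=
  ∑ p ∈ Finset.univ.filter (fun p : Fin 4 × Fin 4 × Fin 4 => p.1 < p.2.1 ∧ p.2.1 < p.2.2),
    X p.1 ^ 2 * X p.2.1 ^ 2 * X p.2.2 ^ 2

/-- `Ĩ4 = z1z2z3z4` -/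
noncomputable def I4t : MvPolynomial (Fin 4) ℂ := ∏ i, X i

/-- `c1⁰ = −12·I2` -/
noncomputable def c1q0 : MvPolynomial (Fin 4) ℂ := -(C (12 : ℂ)) * I2

/-- `c2⁰ = I4 + Ĩ4/4 + 368·I2²` -/
noncomputable def c2q0 : MvPolynomial (Fin 4) ℂ := I4 + C (1 / 4 : ℂ) * I4t + C (368 : ℂ) * I2 ^ 2

/-- `d2⁰ = −I4/6 + Ĩ4/48 − (88/3)·I2²` -/
noncomputable def d2q0 : MvPolynomial (Fin 4) ℂ :=
  -(C (1 / 6 : ℂ)) * I4 + C (1 / 48 : ℂ) * I4t - C (88 / 3 : ℂ) * I2 ^ 2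

/-- `d3⁰ = I6/16 + 8·I2·I4 − I2·Ĩ4/2 + 896·I2³` -/
noncomputable def d3q0 : MvPolynomial (Fin 4) ℂ :=
  C (1 / 16 : ℂ) * I6 + C (8 : ℂ) * I2 * I4 - C (1 / 2 : ℂ) * I2 * I4t + C (896 : ℂ) * I2 ^ 3

section JacobianCriterion

set_option linter.unusedSectionVars false

variable {σ : Type*} [Fintype σ] [DecidableEq σ]

lemma coeff_pderiv (j : σ) (p : MvPolynomial σ ℂ) (m : σ →₀ ℕ) :
    coeff m (pderiv j p) = (m j + 1 : ℂ) * coeff (m + Finsupp.single j 1) p := by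
  induction p using MvPolynomial.induction_on' with
  | monomial s a =>
    rw [pderiv_monomial, coeff_monomial, coeff_monomial]
    by_cases h : s = m + Finsupp.single j 1
    · subst h
      have h1 : m + Finsupp.single j 1 - Finsupp.single j 1 = m := by
        ext k
        simp only [Finsupp.tsub_apply, Finsupp.add_apply, Finsupp.single_apply]
        split <;> omega
      have h2 : (m + Finsupp.single j 1 : σ →₀ ℕ) j = m j + 1 := by simp
      rw [if_pos h1, h2, if_pos rfl]
      push_cast; ring
    · rw [if_neg h]
      by_cases h2 : s - Finsupp.single j 1 = m
      · have hsj : s j = 0 := by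
          by_contra hsj
          apply h
          ext k
          have hk2 : s k - (Finsupp.single j 1) k = m k := by
            rw [← Finsupp.tsub_apply, h2]
          simp only [Finsupp.add_apply, Finsupp.single_apply] at hk2 ⊢
          split at hk2 <;> rename_i hjk
          · simp only [if_pos hjk]; subst hjk; omega
          · simp only [if_neg hjk]; omega
        rw [if_pos h2, hsj]
        simp
      · rw [if_neg h2, mul_zero]
  | add p q hp hq => simp [hp, hq, mul_add]

lemma eq_C_of_pderiv_eq_zero {p : MvPolynomial σ ℂ} (h : ∀ j, pderiv j p = 0) :
    p = C (coeff 0 p) := by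
  ext m
  rcases eq_or_ne m 0 with rfl | hm
  · simp
  · rw [coeff_C, if_neg (Ne.symm hm)]
    obtain ⟨j, hj⟩ : ∃ j, m j ≠ 0 := by
      by_contra hc
      push_neg at hc
      exact hm (Finsupp.ext hc)
    set t := m - Finsupp.single j 1 with ht
    have htm : t + Finsupp.single j 1 = m := by
      ext k
      simp only [ht, Finsupp.add_apply, Finsupp.tsub_apply, Finsupp.single_apply]
      split <;> rename_i hjk
      · subst hjk; omega
      · omega
    have := coeff_pderiv j p t
    rw [h j, htm] at this
    simp only [coeff_zero] at this
    have hne : (t j + 1 : ℂ) ≠ 0 := by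
      have : ((t j + 1 : ℕ) : ℂ) ≠ 0 := Nat.cast_ne_zero.mpr (by omega)
      push_cast at this; exact this
    have := (mul_eq_zero.mp this.symm).resolve_left hne
    exact this

lemma totalDegree_pderiv_lt {p : MvPolynomial σ ℂ} {j : σ} (h : pderiv j p ≠ 0) :
    (pderiv j p).totalDegree < p.totalDegree := by
  have key : ∀ m ∈ (pderiv j p).support, (m.sum fun _ e => e) < p.totalDegree := by
    intro m hm
    rw [MvPolynomial.mem_support_iff, _root_.coeff_pderiv] at hm
    have h2 : coeff (m + Finsupp.single j 1) p ≠ 0 := by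
      intro h0; rw [h0, mul_zero] at hm; exact hm rfl
    have h3 := le_totalDegree (MvPolynomial.mem_support_iff.mpr h2)
    have h4 : ((m + Finsupp.single j 1).sum fun _ e => e) = (m.sum fun _ e => e) + 1 := by
      rw [Finsupp.sum_add_index (by simp) (by simp)]
      simp [Finsupp.sum_single_index]
    omega
  obtain ⟨m, hm⟩ := MvPolynomial.support_nonempty.mpr h
  have hpos : 0 < p.totalDegree := lt_of_le_of_lt (Nat.zero_le _) (key m hm)
  rw [totalDegree]
  exact (Finset.sup_lt_iff (by simpa using hpos)).mpr key

lemma pderiv_aeval_eq_sum (u : σ → MvPolynomial σ ℂ) (i : σ) (p : MvPolynomial σ ℂ) :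
    pderiv i (aeval u p) = ∑ j, aeval u (pderiv j p) * pderiv i (u j) := by
  induction p using MvPolynomial.induction_on with
  | C a => simp [aeval_C, pderiv_C]
  | add p q hp hq =>
    rw [map_add, map_add, hp, hq, ← Finset.sum_add_distrib]
    exact Finset.sum_congr rfl fun j _ => by rw [map_add, map_add, add_mul]
  | mul_X p k hp =>
    rw [map_mul, aeval_X, pderiv_mul, hp]
    have : ∀ j : σ, aeval u (pderiv j (p * X k)) * pderiv i (u j)
        = aeval u (pderiv j p) * pderiv i (u j) * u k
          + (if k = j then aeval u p * pderiv i (u j) else 0) := by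
      intro j
      rw [pderiv_mul, map_add, map_mul, map_mul, aeval_X]
      rcases eq_or_ne k j with rfl | hkj
      · simp [pderiv_X_self]; ring
      · rw [pderiv_X_of_ne hkj, if_neg hkj, map_zero, mul_zero, add_zero, add_zero]
        ring
    rw [Finset.sum_congr rfl fun j _ => this j, Finset.sum_add_distrib,
      Finset.sum_ite_eq Finset.univ k (fun j => aeval u p * pderiv i (u j))]
    simp only [Finset.mem_univ, if_true, Finset.sum_mul]

lemma algIndep_of_jacobian (u : σ → MvPolynomial σ ℂ)
    (hdet : (Matrix.of fun j i => pderiv i (u j)).det ≠ 0) :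
    AlgebraicIndependent ℂ u := by
  rw [algebraicIndependent_iff]
  suffices H : ∀ n : ℕ, ∀ p : MvPolynomial σ ℂ, p.totalDegree ≤ n → aeval u p = 0 → p = 0 by
    intro p hp; exact H p.totalDegree p le_rfl hp
  intro n
  induction n with
  | zero =>
    intro p hdeg hp
    have hC : p = C (coeff 0 p) := by
      apply eq_C_of_pderiv_eq_zero
      intro j
      by_contra hj
      have := totalDegree_pderiv_lt hj
      omega
    rw [hC] at hp ⊢
    rw [aeval_C] at hp
    have h0 : coeff 0 p = 0 := by simpa [MvPolynomial.algebraMap_eq] using hp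
    rw [h0, map_zero]
  | succ n ih =>
    intro p hdeg hp
    set J : Matrix σ σ (MvPolynomial σ ℂ) := Matrix.of fun j i => pderiv i (u j) with hJ
    set v : σ → MvPolynomial σ ℂ := fun j => aeval u (pderiv j p) with hv
    have hvJ : Matrix.vecMul v J = 0 := by
      funext i
      have := pderiv_aeval_eq_sum u i p
      rw [hp, map_zero] at this
      simpa [Matrix.vecMul, dotProduct, hv, hJ] using this.symm
    have hv0 : ∀ j, v j = 0 := by
      intro j
      have h1 : Matrix.vecMul v (J * Matrix.adjugate J) = 0 := by
        rw [← Matrix.vecMul_vecMul, hvJ, Matrix.zero_vecMul]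
      rw [Matrix.mul_adjugate] at h1
      have h2 := congrFun h1 j
      simp only [Matrix.vecMul, dotProduct, Matrix.smul_apply, Matrix.one_apply,
        smul_eq_mul, mul_ite, mul_one, mul_zero, Finset.sum_ite_eq', Finset.mem_univ,
        if_true, Pi.zero_apply] at h2
      rcases mul_eq_zero.mp h2 with h | h
      · exact h
      · exact absurd h hdet
    have hpd : ∀ j, pderiv j p = 0 := by
      intro j
      by_cases hj : pderiv j p = 0
      · exact hj
      · have hlt := totalDegree_pderiv_lt (p := p) (j := j) hj
        exact ih (pderiv j p) (by omega) (hv0 j)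
    have hC := eq_C_of_pderiv_eq_zero hpd
    rw [hC] at hp ⊢
    rw [aeval_C] at hp
    have h0 : coeff 0 p = 0 := by simpa [MvPolynomial.algebraMap_eq] using hp
    rw [h0, map_zero]

end JacobianCriterion

lemma hI2 : I2 = X 0 ^ 2 + X 1 ^ 2 + X 2 ^ 2 + X 3 ^ 2 := by
  simp [I2, Fin.sum_univ_four]

lemma hI4t : I4t = X 0 * X 1 * X 2 * X 3 := by
  simp [I4t, Fin.prod_univ_four]

lemma hI4 : I4 = X 0 ^ 2 * X 1 ^ 2 + X 0 ^ 2 * X 2 ^ 2 + X 0 ^ 2 * X 3 ^ 2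
    + X 1 ^ 2 * X 2 ^ 2 + X 1 ^ 2 * X 3 ^ 2 + X 2 ^ 2 * X 3 ^ 2 := by
  rw [I4, show (Finset.univ.filter fun p : Fin 4 × Fin 4 => p.1 < p.2)
      = ({(0,1),(0,2),(0,3),(1,2),(1,3),(2,3)} : Finset (Fin 4 × Fin 4)) from by decide,
    Finset.sum_insert (by decide), Finset.sum_insert (by decide), Finset.sum_insert (by decide),
    Finset.sum_insert (by decide), Finset.sum_insert (by decide), Finset.sum_singleton]
  ring

lemma hI6 : I6 = X 0 ^ 2 * X 1 ^ 2 * X 2 ^ 2 + X 0 ^ 2 * X 1 ^ 2 * X 3 ^ 2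
    + X 0 ^ 2 * X 2 ^ 2 * X 3 ^ 2 + X 1 ^ 2 * X 2 ^ 2 * X 3 ^ 2 := by
  rw [I6, show (Finset.univ.filter fun p : Fin 4 × Fin 4 × Fin 4 => p.1 < p.2.1 ∧ p.2.1 < p.2.2)
      = ({(0,1,2),(0,1,3),(0,2,3),(1,2,3)} : Finset (Fin 4 × Fin 4 × Fin 4)) from by decide,
    Finset.sum_insert (by decide), Finset.sum_insert (by decide), Finset.sum_insert (by decide),
    Finset.sum_singleton]
  ring

set_option maxHeartbeats 3200000 in
/-- The four polynomials `c1⁰, c2⁰, d2⁰, d3⁰` are algebraically independent over ℂ. -/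
theorem stmt_4 :
    AlgebraicIndependent ℂ (![c1q0, c2q0, d2q0, d3q0] : Fin 4 → MvPolynomial (Fin 4) ℂ) := by
  apply algIndep_of_jacobian
  set F : Fin 4 → MvPolynomial (Fin 4) ℂ := ![c1q0, c2q0, d2q0, d3q0] with hF
  set M : Matrix (Fin 4) (Fin 4) (MvPolynomial (Fin 4) ℂ) :=
    Matrix.of fun j i => pderiv i (F j) with hM
  have key : M.map (eval (![1,2,3,4] : Fin 4 → ℂ)) =
      !![-24, -48, -72, -96;
         44224, 88427, 132608, 353507/2;
         -21175/6, -84685/12, -63485/6, -338365/24;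
         9712669/2, 38841241/4, 29116767/2, 38795581/2] := by
    ext j i
    fin_cases j <;> fin_cases i <;>
      · simp [hM, hF, Matrix.map_apply, c1q0, c2q0, d2q0, d3q0, hI2, hI4, hI6, hI4t,
          pderiv_mul, pderiv_pow, Pi.single_apply]
        norm_num
  intro hd
  have h1 : (M.map (eval (![1,2,3,4] : Fin 4 → ℂ))).det = 0 := by
    rw [← RingHom.mapMatrix_apply, ← RingHom.map_det, hd, map_zero]
  rw [key] at h1
  simp [Matrix.det_succ_row_zero, Fin.sum_univ_succ] at h1
  simp [Fin.succAbove, Fin.lt_def] at h1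
  norm_num at h1
end

section
/- The four polynomials I2, I4, I6, Ĩ4 in ℂ[z1,z2,z3,z4] are algebraically independent over ℂ. -/
open MvPolynomial Complex

/-- Even/odd decomposition of a polynomial. -/
lemma even_odd_decomp {S : Type*} [CommRing S] (n : ℕ) :
    ∀ p : Polynomial S, p.natDegree ≤ n →
      ∃ a b : Polynomial S,
        p = a.comp (Polynomial.X ^ 2) + Polynomial.X * b.comp (Polynomial.X ^ 2) := by
  induction n with
  | zero =>
    intro p hp
    refine ⟨Polynomial.C (p.coeff 0), 0, ?_⟩
    rw [Polynomial.eq_C_of_natDegree_le_zero hp]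
    simp
  | succ n ih =>
    intro p hp
    obtain ⟨a, b, h⟩ := ih p.divX (by
      have := p.natDegree_divX_eq_natDegree_tsub_one; omega)
    refine ⟨Polynomial.C (p.coeff 0) + Polynomial.X * b, a, ?_⟩
    conv_lhs => rw [← p.X_mul_divX_add]
    rw [h]
    simp only [Polynomial.add_comp, Polynomial.mul_comp, Polynomial.X_comp, Polynomial.C_comp]
    ring

lemma transcendental_of_transcendental_sq {S B : Type*} [CommRing S] [IsDomain S] [CommRing B]
    [Algebra S B] {x : B} (h : Transcendental S (x ^ 2)) : Transcendental S x := by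
  intro hx
  obtain ⟨p, hp0, hpx⟩ := hx
  obtain ⟨a, b, hd⟩ := even_odd_decomp p.natDegree p le_rfl
  apply h
  refine ⟨a ^ 2 - Polynomial.X * b ^ 2, ?_, ?_⟩
  · intro hq
    have heq : a ^ 2 = Polynomial.X * b ^ 2 := sub_eq_zero.mp hq
    rcases eq_or_ne b 0 with rfl | hb
    · have ha : a = 0 := by
        have h2 : a ^ 2 = 0 := by simpa using heq
        exact pow_eq_zero_iff two_ne_zero |>.mp h2
      apply hp0
      rw [hd, ha]; simp
    · rcases eq_or_ne a 0 with rfl | ha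
      · exact (mul_ne_zero Polynomial.X_ne_zero (pow_ne_zero 2 hb)) (by simpa using heq.symm)
      · have hdeg := congrArg Polynomial.natDegree heq
        rw [Polynomial.natDegree_pow,
          Polynomial.natDegree_mul Polynomial.X_ne_zero (pow_ne_zero 2 hb),
          Polynomial.natDegree_pow, Polynomial.natDegree_X] at hdeg
        omega
  · have h0 : Polynomial.aeval x p = 0 := hpx
    rw [hd] at h0
    simp only [map_add, map_mul, Polynomial.aeval_comp, Polynomial.aeval_X_pow, map_pow,
      Polynomial.aeval_X, map_sub] at h0 ⊢
    linear_combination (Polynomial.aeval (x ^ 2) a - x * Polynomial.aeval (x ^ 2) b) * h0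

lemma esymm_algIndep : AlgebraicIndependent ℂ
    (fun i : Fin 4 => esymm (Fin 4) ℂ ((i : ℕ) + 1)) := by
  have hinj := MvPolynomial.esymmAlgHom_fin_injective (m := 4) ℂ (n := 4) le_rfl
  rw [AlgebraicIndependent]
  intro p q hpq
  apply hinj
  apply Subtype.ext
  rw [esymmAlgHom_apply, esymmAlgHom_apply]
  exact hpq

lemma sq_inj : Function.Injective
    (aeval (fun i : Fin 4 => (X i : MvPolynomial (Fin 4) ℂ) ^ 2) :
      MvPolynomial (Fin 4) ℂ →ₐ[ℂ] MvPolynomial (Fin 4) ℂ) := by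
  have h : AlgebraicIndependent ℂ (fun i : Fin 4 => (X i : MvPolynomial (Fin 4) ℂ) ^ 2) := by
    have := MvPolynomial.algebraicIndependent_polynomial_aeval_X (ι := Fin 4) (R := ℂ)
      (fun _ => Polynomial.X ^ 2)
      (fun _ => (Polynomial.transcendental_X ℂ).pow two_pos)
    simpa using this
  exact h

lemma key_comp :
    (aeval (fun i : Fin 4 => (X i : MvPolynomial (Fin 4) ℂ) ^ 2)) ∘
      (fun i : Fin 4 => esymm (Fin 4) ℂ ((i : ℕ) + 1)) = ![I2, I4, I6, I4t ^ 2] := by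
  funext i
  fin_cases i
  · show aeval _ (esymm (Fin 4) ℂ 1) = I2
    rw [esymm, show (Finset.powersetCard 1 (Finset.univ : Finset (Fin 4))) =
      {{0}, {1}, {2}, {3}} from by decide]
    repeat rw [Finset.sum_insert (by decide)]
    rw [Finset.sum_singleton]
    simp only [Finset.prod_singleton, map_add, aeval_X]
    rw [I2, Fin.sum_univ_four]
    ring
  · show aeval _ (esymm (Fin 4) ℂ 2) = I4
    rw [esymm, show (Finset.powersetCard 2 (Finset.univ : Finset (Fin 4))) =
      {{0,1}, {0,2}, {0,3}, {1,2}, {1,3}, {2,3}} from by decide]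
    repeat rw [Finset.sum_insert (by decide)]
    rw [Finset.sum_singleton]
    repeat rw [Finset.prod_insert (by decide)]
    simp only [Finset.prod_singleton, map_add, map_mul, aeval_X]
    rw [I4, show Finset.univ.filter (fun p : Fin 4 × Fin 4 => p.1 < p.2) =
      {(0,1), (0,2), (0,3), (1,2), (1,3), (2,3)} from by decide]
    repeat rw [Finset.sum_insert (by decide)]
    try rw [Finset.sum_singleton]
    try ring
  · show aeval _ (esymm (Fin 4) ℂ 3) = I6
    rw [esymm, show (Finset.powersetCard 3 (Finset.univ : Finset (Fin 4))) =
      {{0,1,2}, {0,1,3}, {0,2,3}, {1,2,3}} from by decide]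
    repeat rw [Finset.sum_insert (by decide)]
    rw [Finset.sum_singleton]
    repeat rw [Finset.prod_insert (by decide)]
    simp only [Finset.prod_singleton, map_add, map_mul, aeval_X]
    rw [I6, show Finset.univ.filter
        (fun p : Fin 4 × Fin 4 × Fin 4 => p.1 < p.2.1 ∧ p.2.1 < p.2.2) =
      {(0,1,2), (0,1,3), (0,2,3), (1,2,3)} from by decide]
    repeat rw [Finset.sum_insert (by decide)]
    try rw [Finset.sum_singleton]
    try ring
  · show aeval _ (esymm (Fin 4) ℂ 4) = I4t ^ 2
    rw [esymm, show (Finset.powersetCard 4 (Finset.univ : Finset (Fin 4))) =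
      {Finset.univ} from by decide]
    rw [Finset.sum_singleton]
    rw [show (Finset.univ : Finset (Fin 4)).prod X = I4t from rfl, I4t, Fin.prod_univ_four]
    simp only [map_mul, aeval_X]
    ring

/-- The four polynomials `I2, I4, I6, Ĩ4` are algebraically independent over ℂ. -/
theorem stmt_17 :
    AlgebraicIndependent ℂ (![I2, I4, I6, I4t] : Fin 4 → MvPolynomial (Fin 4) ℂ) := by
  have h2 : AlgebraicIndependent ℂ ![I2, I4, I6, I4t ^ 2] := by
    rw [← key_comp]
    exact esymm_algIndep.map' sq_inj
  have h3 : AlgebraicIndependent ℂ ![I2, I4, I6] := by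
    have h := h2.comp Fin.castSucc (Fin.castSucc_injective 3)
    have e : (![I2, I4, I6, I4t ^ 2] ∘ Fin.castSucc) = ![I2, I4, I6] := by
      funext i; fin_cases i <;> rfl
    rwa [e] at h
  have hopt2 : AlgebraicIndependent ℂ
      (fun o : Option (Fin 3) => o.elim (I4t ^ 2) ![I2, I4, I6]) := by
    have h := h2.comp (fun o : Option (Fin 3) => o.elim 3 Fin.castSucc) (by decide)
    have e : (![I2, I4, I6, I4t ^ 2] ∘ fun o : Option (Fin 3) => o.elim 3 Fin.castSucc)
        = fun o : Option (Fin 3) => o.elim (I4t ^ 2) ![I2, I4, I6] := by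
      funext o
      rcases o with _ | i
      · rfl
      · fin_cases i <;> rfl
    rwa [e] at h
  have ht2 : Transcendental (Algebra.adjoin ℂ (Set.range ![I2, I4, I6])) (I4t ^ 2) :=
    (h3.option_iff_transcendental (I4t ^ 2)).1 hopt2
  have ht : Transcendental (Algebra.adjoin ℂ (Set.range ![I2, I4, I6])) I4t :=
    transcendental_of_transcendental_sq ht2
  have hopt : AlgebraicIndependent ℂ
      (fun o : Option (Fin 3) => o.elim I4t ![I2, I4, I6]) :=
    (h3.option_iff_transcendental I4t).2 ht
  have h := hopt.comp (![some 0, some 1, some 2, none] : Fin 4 → Option (Fin 3)) (by decide)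
  have e : ((fun o : Option (Fin 3) => o.elim I4t ![I2, I4, I6]) ∘
      (![some 0, some 1, some 2, none] : Fin 4 → Option (Fin 3))) = ![I2, I4, I6, I4t] := by
    funext i; fin_cases i <;> rfl
  rwa [e] at h
end
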